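/- Let A ∈ ℝ^{m×n} and suppose Aᵀ = Q R Zᵀ with Q ∈ ℝ^{n×k} having orthonormal columns, R = [R₁ | R₂] with R₁ ∈ ℝ^{k×k} invertible and R₂ = R₁ C for some C ∈ ℝ^{k×(m−k)}, and Z ∈ ℝ^{m×m} a permutation matrix whose first k columns select the index set ℐ. Then A = P A(ℐ,:) exactly, where P = Z [I_k | C]ᵀ. -/

import Mathlib

open Matrix

noncomputable def frobNorm {m n : ℕ} (A : Matrix (Fin m) (Fin n) ℝ) : ℝ :=
  Real.sqrt (∑ i, ∑ j, (A i j) ^ 2)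

noncomputable def specNorm {m n : ℕ} (A : Matrix (Fin m) (Fin n) ℝ) : ℝ :=
  ‖(LinearMap.toContinuousLinearMap (Matrix.toEuclideanLin A))‖

noncomputable def lamMax {m : ℕ} (S : Matrix (Fin m) (Fin m) ℝ) (hS : S.IsHermitian) : ℝ :=
  ⨆ i, hS.eigenvalues i


/-- Exactness of the row ID when the trailing QR block is exactly representable:
if `Aᵀ = Q [R₁ | R₁C] Zᵀ` (column permutation encoded by `z`) with `Q` having
orthonormal columns and `R₁` invertible, then `A = P A(ℐ,:)` exactly, where
`P = Z [I_k | C]ᵀ` and `ℐ i = z.symm (inl i)`. -/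
theorem row_ID_exact_of_QR
    (m n k : ℕ) (hk : k ≤ m)
    (A : Matrix (Fin m) (Fin n) ℝ)
    (Q : Matrix (Fin n) (Fin k) ℝ) (hQ : Qᵀ * Q = 1)
    (R1 : Matrix (Fin k) (Fin k) ℝ) (hR1 : IsUnit R1.det)
    (C : Matrix (Fin k) (Fin (m - k)) ℝ)
    (z : Fin m ≃ (Fin k ⊕ Fin (m - k)))
    (hA : Aᵀ = (Q * Matrix.fromCols R1 (R1 * C)).submatrix id (⇑z))
    (P : Matrix (Fin m) (Fin k) ℝ)
    (hP : P = (Matrix.fromRows (1 : Matrix (Fin k) (Fin k) ℝ) Cᵀ).submatrix (⇑z) id) :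
    A = P * A.submatrix (fun i : Fin k => z.symm (Sum.inl i)) id := by
  subst hP
  have hAij : ∀ i j, A i j = (Q * Matrix.fromCols R1 (R1 * C)) j (z i) := by
    intro i j
    have := congrFun (congrFun hA j) i
    simpa using this
  ext i j
  rw [Matrix.mul_apply]
  simp only [Matrix.submatrix_apply, id]
  have key : ∀ l : Fin k, A (z.symm (Sum.inl l)) j
      = (Q * Matrix.fromCols R1 (R1 * C)) j (Sum.inl l) := by
    intro l
    rw [hAij]
    simp
  rcases h : z i with a | b
  · rw [hAij i j, h]
    rw [Finset.sum_eq_single a]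
    · simp [key, Matrix.fromRows_apply_inl]
    · intro l _ hl
      simp [key, Matrix.fromRows_apply_inl, Matrix.one_apply, Ne.symm hl]
    · simp
  · rw [hAij i j, h]
    simp only [key, Matrix.fromRows_apply_inr, Matrix.of_apply, Sum.elim_inr, Matrix.transpose_apply]
    simp only [Matrix.mul_apply, Matrix.fromCols, Matrix.of_apply, Sum.elim_inl, Sum.elim_inr]
    simp only [Finset.mul_sum]
    rw [Finset.sum_comm]
    exact Finset.sum_congr rfl fun x _ => Finset.sum_congr rfl fun l _ => by ring
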